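/- Consider the LP min{cᵀx : Ax = b} with A ∈ ℝ^{m×n}, rank(A) = n, m > n, and b ∈ range(A). For the accelerated ALM iteration x_{k+1} = (AᵀA)^{-1}(Aᵀb - (1/η)(Aᵀy_k + c)), the residual z_k := Aᵀy_k + c satisfies z_{k+1} = -(t_k/t_{k+1})·z_k, hence z_k = (-1)^k·(t₀/t_k)·c, where y_{k+1} = λ_{k+1} + ((t_k-1)/t_{k+1})(λ_{k+1}-λ_k) + (t_k/t_{k+1})(λ_{k+1}-y_k), λ_{k+1} = y_k + η(Ax_{k+1}-b), and z₀ = c (i.e., y₀ = 0). -/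
import Mathlib


open Matrix

theorem guler2nd_residual_recursion {m n : ℕ} (hmn : n < m)
    (A : Matrix (Fin m) (Fin n) ℝ) (hrank : A.rank = n)
    (b : Fin m → ℝ) (hb : ∃ x₀ : Fin n → ℝ, A.mulVec x₀ = b)
    (c : Fin n → ℝ) (η : ℝ) (hη : 0 < η)
    (t : ℕ → ℝ) (ht0 : t 0 = 1)
    (htrec : ∀ k, t (k + 1) = (1 + Real.sqrt (1 + 4 * t k ^ 2)) / 2)
    (x : ℕ → Fin n → ℝ) (y lam : ℕ → Fin m → ℝ) (z : ℕ → Fin n → ℝ)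
    (hy0 : y 0 = 0)
    (hx : ∀ k, x (k + 1) =
      (Aᵀ * A)⁻¹.mulVec (Aᵀ.mulVec b - (1 / η) • (Aᵀ.mulVec (y k) + c)))
    (hlam : ∀ k, lam (k + 1) = y k + η • (A.mulVec (x (k + 1)) - b))
    (hy : ∀ k, y (k + 1) = lam (k + 1) + ((t k - 1) / t (k + 1)) • (lam (k + 1) - lam k)
      + (t k / t (k + 1)) • (lam (k + 1) - y k))
    (hz : ∀ k, z k = Aᵀ.mulVec (y k) + c) :
    (∀ k, z (k + 1) = (-(t k / t (k + 1))) • z k) ∧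
      ∀ k, z k = ((-1 : ℝ) ^ k * (t 0 / t k)) • c := by
  -- Aᵀ * A is invertible
  have hunit : IsUnit (Aᵀ * A) := by
    rw [← Matrix.mulVec_injective_iff_isUnit]
    show Function.Injective (Aᵀ * A).mulVecLin
    rw [← LinearMap.ker_eq_bot, Matrix.ker_mulVecLin_transpose_mul_self]
    have h := LinearMap.finrank_range_add_finrank_ker A.mulVecLin
    rw [Matrix.rank] at hrank
    rw [hrank, Module.finrank_fin_fun] at h
    have h0 : Module.finrank ℝ (LinearMap.ker A.mulVecLin) = 0 := by omega
    exact Submodule.finrank_eq_zero.mp h0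
  have hinv : (Aᵀ * A) * (Aᵀ * A)⁻¹ = 1 :=
    Matrix.mul_nonsing_inv _ ((Matrix.isUnit_iff_isUnit_det _).mp hunit)
  have hηne : η ≠ 0 := ne_of_gt hη
  -- key: Aᵀ λ_{k+1} = -c
  have hAl : ∀ k, Aᵀ.mulVec (lam (k + 1)) = -c := by
    intro k
    rw [hlam k, Matrix.mulVec_add, Matrix.mulVec_smul, Matrix.mulVec_sub,
      hx k, Matrix.mulVec_mulVec, Matrix.mulVec_mulVec,
      hinv, Matrix.one_mulVec]
    ext i
    simp only [Pi.add_apply, Pi.smul_apply, Pi.sub_apply, Pi.neg_apply, smul_eq_mul]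
    field_simp
    ring
  -- positivity of t
  have htpos : ∀ k, 0 < t k := by
    intro k
    cases k with
    | zero => rw [ht0]; norm_num
    | succ j =>
      rw [htrec j]
      have : (0 : ℝ) ≤ Real.sqrt (1 + 4 * t j ^ 2) := Real.sqrt_nonneg _
      linarith
  -- part 1
  have part1 : ∀ k, z (k + 1) = (-(t k / t (k + 1))) • z k := by
    intro k
    rw [hz (k + 1), hz k, hy k, Matrix.mulVec_add, Matrix.mulVec_add,
      Matrix.mulVec_smul, Matrix.mulVec_smul, Matrix.mulVec_sub, Matrix.mulVec_sub,
      hAl k]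
    have hmid : ((t k - 1) / t (k + 1)) • (-c - Aᵀ.mulVec (lam k)) = 0 := by
      cases k with
      | zero =>
        rw [ht0]
        norm_num
      | succ j =>
        rw [hAl j]
        simp
    rw [hmid]
    ext i
    simp only [Pi.add_apply, Pi.smul_apply, Pi.sub_apply, Pi.neg_apply, Pi.zero_apply,
      smul_eq_mul]
    ring
  refine ⟨part1, ?_⟩
  intro k
  induction k with
  | zero =>
    rw [hz 0, hy0, Matrix.mulVec_zero, ht0]
    simp
  | succ j ih =>
    rw [part1 j, ih, smul_smul]
    congr 1
    have h1 : t j ≠ 0 := ne_of_gt (htpos j)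
    have h2 : t (j + 1) ≠ 0 := ne_of_gt (htpos (j + 1))
    field_simp
    ring
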